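/- Fix an integer n ≥ 1, let c, d ∈ A and let m = min(v_t(c), n−1), where v_t(c) is the multiplicity of t in c (with the convention m = n−1 when c = 0). Let h be a standard lift for (c,d) of level tⁿ. Then for every x ∈ A, the matrix h·[[1,x],[0,1]]·h⁻¹ lies in Γ₁(tⁿ) if and only if t^{n−1−m} divides x. -/

import Mathlib

open Polynomial Matrix

/-- `Γ₁(𝔫)` as a set of 2×2 matrices over `A = F[t]`:
matrices of determinant 1 congruent to `[[1,*],[0,1]]` mod `𝔫`. -/
def Gamma1 (F : Type*) [Field F] (n : Polynomial F) :
    Set (Matrix (Fin 2) (Fin 2) (Polynomial F)) :=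
  {γ | γ.det = 1 ∧ n ∣ γ 1 0 ∧ n ∣ (γ 0 0 - 1) ∧ n ∣ (γ 1 1 - 1)}

/-- A standard lift `h = h_{(c,d)}` of level `tⁿ`: an element of `SL₂(A)` with
`h₁₂ ≡ 0`, `h₂₁ ≡ tc`, `h₂₂ ≡ 1 + td` and `h₁₁(1+td) ≡ 1 (mod tⁿ)`. -/
def IsStdLift (F : Type*) [Field F] (n : ℕ) (c d : Polynomial F)
    (h : Matrix (Fin 2) (Fin 2) (Polynomial F)) : Prop :=
  h.det = 1 ∧ (X : Polynomial F) ^ n ∣ h 0 1 ∧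
    (X : Polynomial F) ^ n ∣ (h 1 0 - X * c) ∧
    (X : Polynomial F) ^ n ∣ (h 1 1 - (1 + X * d)) ∧
    (X : Polynomial F) ^ n ∣ (h 0 0 * (1 + X * d) - 1)

open scoped Classical in
theorem stmt8 (p : ℕ) (hp : p.Prime) (F : Type*) [Field F] [Fintype F] [CharP F p]
    (n : ℕ) (hn : 1 ≤ n) (c d : Polynomial F) (m : ℕ)
    (hm : m = if c = 0 then n - 1 else min (Polynomial.rootMultiplicity 0 c) (n - 1))
    (h : Matrix (Fin 2) (Fin 2) (Polynomial F)) (hh : IsStdLift F n c d h) :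
    ∀ x : Polynomial F,
      h * !![1, x; 0, 1] * h⁻¹ ∈ Gamma1 F ((X : Polynomial F) ^ n) ↔
        (X : Polynomial F) ^ (n - 1 - m) ∣ x := by
  obtain ⟨hdet, hb, hc2, hd2, ha⟩ := hh
  intro x
  have hXn : (X : Polynomial F) ≠ 0 := X_ne_zero
  set a := h 0 0 with ha0
  set b := h 0 1 with hb0
  set cc := h 1 0 with hc0
  set dd := h 1 1 with hd0
  have hdet2 : a * dd - b * cc = 1 := by rw [← Matrix.det_fin_two]; exact hdet
  have hinv : h⁻¹ = !![dd, -b; -cc, a] := by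
    rw [Matrix.inv_def, Matrix.adjugate_fin_two, hdet]
    norm_num
    exact ⟨⟨rfl, rfl⟩, rfl, rfl⟩
  have hprod : h * !![1, x; 0, 1] * h⁻¹ =
      !![1 - a * cc * x, a * a * x; -(cc * cc * x), 1 + a * cc * x] := by
    rw [hinv, Matrix.eta_fin_two h, ← ha0, ← hb0, ← hc0, ← hd0,
      Matrix.mul_fin_two, Matrix.mul_fin_two]
    refine Matrix.ext fun i j => ?_
    fin_cases i <;> fin_cases j <;> simp <;>
      first
        | ring1
        | linear_combination hdet2
        | linear_combination x * hdet2
  rw [hprod]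
  -- membership reduces to two divisibility conditions
  have hmem : !![1 - a * cc * x, a * a * x; -(cc * cc * x), 1 + a * cc * x] ∈
        Gamma1 F ((X : Polynomial F) ^ n) ↔
      ((X : Polynomial F) ^ n ∣ cc * cc * x ∧ (X : Polynomial F) ^ n ∣ a * cc * x) := by
    simp only [Gamma1, Set.mem_setOf_eq, Matrix.det_fin_two_of, Matrix.cons_val',
      Matrix.cons_val_zero, Matrix.cons_val_one, Matrix.head_cons, Matrix.empty_val',
      Matrix.cons_val_fin_one, Matrix.head_fin_const]
    constructor
    · rintro ⟨_, h1, h2, h3⟩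
      refine ⟨(dvd_neg).mp h1, ?_⟩
      have := h3
      simpa using this
    · rintro ⟨h1, h2⟩
      refine ⟨by ring, (dvd_neg).mpr h1, ?_, ?_⟩
      · simpa using h2.neg_right
      · simpa using h2
  rw [hmem]
  -- reduce to X^n ∣ cc * x
  have step1 : ((X : Polynomial F) ^ n ∣ cc * cc * x ∧ (X : Polynomial F) ^ n ∣ a * cc * x) ↔
      (X : Polynomial F) ^ n ∣ cc * x := by
    constructor
    · rintro ⟨-, h2⟩
      have : cc * x = (1 + X * d) * (a * cc * x) - (a * (1 + X * d) - 1) * (cc * x) := by ring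
      rw [this]
      exact dvd_sub (h2.mul_left _) (ha.mul_right _)
    · intro hx
      exact ⟨by rw [show cc * cc * x = cc * (cc * x) by ring]; exact hx.mul_left _,
        by rw [show a * cc * x = a * (cc * x) by ring]; exact hx.mul_left _⟩
  rw [step1]
  -- replace cc by X * c
  have step2 : (X : Polynomial F) ^ n ∣ cc * x ↔ (X : Polynomial F) ^ n ∣ X * c * x := by
    have hsub : (X : Polynomial F) ^ n ∣ (cc - X * c) * x := hc2.mul_right x
    constructor
    · intro hx
      have : X * c * x = cc * x - (cc - X * c) * x := by ring
      rw [this]; exact dvd_sub hx hsub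
    · intro hx
      have : cc * x = X * c * x + (cc - X * c) * x := by ring
      rw [this]; exact dvd_add hx hsub
  rw [step2]
  -- peel off one factor of X
  set k := n - 1 with hk
  have hnk : n = k + 1 := by omega
  have step3 : (X : Polynomial F) ^ n ∣ X * c * x ↔ (X : Polynomial F) ^ k ∣ c * x := by
    rw [hnk, pow_succ, show (X : Polynomial F) * c * x = X * (c * x) by ring,
      show (X : Polynomial F) ^ k * X = X * X ^ k by ring, mul_dvd_mul_iff_left hXn]
  rw [step3]
  -- final step: analyze the root multiplicity
  by_cases hc : c = 0
  · subst hc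
    rw [if_pos rfl] at hm
    have : n - 1 - m = 0 := by omega
    simp [this, hm]
  · rw [if_neg hc] at hm
    set v := Polynomial.rootMultiplicity 0 c with hv
    have hvd : (X : Polynomial F) ^ v ∣ c := by
      have := Polynomial.pow_rootMultiplicity_dvd c 0
      simpa using this
    obtain ⟨u, hu⟩ := hvd
    have hnd : ¬ (X : Polynomial F) ∣ u := by
      intro ⟨w, hw⟩
      have : (X : Polynomial F) ^ (v + 1) ∣ c := ⟨w, by rw [hu, hw]; ring⟩
      have hnot := Polynomial.pow_rootMultiplicity_not_dvd hc (0 : F)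
      simp only [C_0, sub_zero] at hnot
      exact hnot this
    by_cases hvk : k ≤ v
    · have hmk : m = k := by omega
      have : n - 1 - m = 0 := by omega
      rw [this]
      simp only [pow_zero, one_dvd, iff_true]
      calc (X : Polynomial F) ^ k ∣ X ^ v := pow_dvd_pow _ hvk
        _ ∣ c * x := (Dvd.intro u hu.symm).mul_right x
    · have hmv : m = v := by omega
      have hkv : n - 1 - m = k - v := by omega
      rw [hkv, hu]
      have hsplit : (X : Polynomial F) ^ k = X ^ v * X ^ (k - v) := by
        rw [← pow_add]; congr 1; omega
      rw [hsplit, show (X : Polynomial F) ^ v * u * x = X ^ v * (u * x) by ring,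
        mul_dvd_mul_iff_left (pow_ne_zero _ hXn)]
      constructor
      · intro hdvd
        exact (Polynomial.prime_X).pow_dvd_of_dvd_mul_left _ hnd hdvd
      · intro hdvd
        exact hdvd.mul_left u
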